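/- Let q ≥ 1 and let A be a complex matrix on ℋ^{⊗q} whose symmetric part 𝖯_q(A) is Hermitian. Then for every n ≥ 0 and every density matrix ρ on ℂ^d, Tr[𝖯_q(A) ρ^{⊗q}] ≤ λ_max(𝖯_{q+n}(A ⊗ I^{⊗n})); that is, each μ_n(A) is an upper bound on max_ρ Tr[A ρ^{⊗q}]. -/

import Mathlib

open Matrix Filter
open scoped ComplexOrder

/-- The permutation matrix `P_π` on `ℋ^{⊗n}` (`ℋ = ℂ^d`), acting by
`(P_π x)_{(i₁,…,iₙ)} = x_{(i_{π(1)},…,i_{π(n)})}`. -/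
noncomputable def permMatrix (d n : ℕ) (π : Equiv.Perm (Fin n)) :
    Matrix (Fin n → Fin d) (Fin n → Fin d) ℂ :=
  fun i j => if j = i ∘ π then 1 else 0

/-- The symmetrization `𝖯_n(X) = (1/n!) Σ_{π ∈ S_n} P_π† X P_π`. -/
noncomputable def symmetrize (d n : ℕ)
    (X : Matrix (Fin n → Fin d) (Fin n → Fin d) ℂ) :
    Matrix (Fin n → Fin d) (Fin n → Fin d) ℂ :=
  (n.factorial : ℂ)⁻¹ • ∑ π : Equiv.Perm (Fin n),
    (permMatrix d n π)ᴴ * X * permMatrix d n π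

/-- The largest (real) eigenvalue of a matrix: `λ_max`. -/
noncomputable def lamMax {I : Type*} [Fintype I] [DecidableEq I]
    (X : Matrix I I ℂ) : ℝ :=
  sSup {t : ℝ | ∃ v : I → ℂ, v ≠ 0 ∧ X *ᵥ v = (t : ℂ) • v}

/-- The `q`-fold Kronecker power `ρ^{⊗q}`. -/
noncomputable def tensPow (d q : ℕ) (ρ : Matrix (Fin d) (Fin d) ℂ) :
    Matrix (Fin q → Fin d) (Fin q → Fin d) ℂ :=
  fun i j => ∏ a, ρ (i a) (j a)

/-- The matrix `A ⊗ I^{⊗n}` on `ℋ^{⊗(q+n)}`. -/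
noncomputable def tensExt (d q n : ℕ)
    (A : Matrix (Fin q → Fin d) (Fin q → Fin d) ℂ) :
    Matrix (Fin (q + n) → Fin d) (Fin (q + n) → Fin d) ℂ :=
  fun i j =>
    A (fun a => i (Fin.castAdd n a)) (fun a => j (Fin.castAdd n a)) *
      ∏ b : Fin n, (if i (Fin.natAdd q b) = j (Fin.natAdd q b) then (1 : ℂ) else 0)

/-- A density matrix: positive semidefinite with unit trace. -/
def IsDensity (d : ℕ) (ρ : Matrix (Fin d) (Fin d) ℂ) : Prop :=
  ρ.PosSemidef ∧ ρ.trace = 1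

/-- Precomposition by a permutation, as an `Equiv` on tuples. -/
def pe {d n : ℕ} (π : Equiv.Perm (Fin n)) : (Fin n → Fin d) ≃ (Fin n → Fin d) where
  toFun f := f ∘ π
  invFun f := f ∘ ⇑π.symm
  left_inv f := by funext a; simp
  right_inv f := by funext a; simp

@[simp] lemma pe_apply {d n : ℕ} (π : Equiv.Perm (Fin n)) (f : Fin n → Fin d) :
    pe π f = f ∘ π := rfl

lemma permMatrix_conj_apply (d n : ℕ) (π : Equiv.Perm (Fin n))
    (X : Matrix (Fin n → Fin d) (Fin n → Fin d) ℂ) (i j : Fin n → Fin d) :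
    ((permMatrix d n π)ᴴ * X * permMatrix d n π) i j = X (i ∘ ⇑π.symm) (j ∘ ⇑π.symm) := by
  have hmulP : ∀ (Y : Matrix (Fin n → Fin d) (Fin n → Fin d) ℂ) (i j : Fin n → Fin d),
      (Y * permMatrix d n π) i j = Y i (j ∘ ⇑π.symm) := by
    intro Y i j
    rw [mul_apply]
    have : ∀ k : Fin n → Fin d, permMatrix d n π k j = if k = j ∘ ⇑π.symm then 1 else 0 := by
      intro k
      unfold permMatrix
      congr 1
      simp only [eq_iff_iff]
      constructor
      · rintro rfl; funext a; simp
      · rintro rfl; funext a; simp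
    simp only [this, mul_ite, mul_one, mul_zero]
    simp
  rw [hmulP]
  rw [mul_apply]
  have : ∀ k : Fin n → Fin d, (permMatrix d n π)ᴴ i k
      = if k = i ∘ ⇑π.symm then 1 else 0 := by
    intro k
    rw [conjTranspose_apply]
    unfold permMatrix
    rw [apply_ite (star : ℂ → ℂ), star_one, star_zero]
    congr 1
    simp only [eq_iff_iff]
    constructor
    · rintro rfl; funext a; simp
    · rintro rfl; funext a; simp
  simp only [this, ite_mul, one_mul, zero_mul]
  simp

lemma symmetrize_apply (d n : ℕ) (X : Matrix (Fin n → Fin d) (Fin n → Fin d) ℂ)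
    (i j : Fin n → Fin d) :
    symmetrize d n X i j
      = (n.factorial : ℂ)⁻¹ * ∑ π : Equiv.Perm (Fin n), X (i ∘ π) (j ∘ π) := by
  unfold symmetrize
  rw [Matrix.smul_apply, Matrix.sum_apply, smul_eq_mul]
  congr 1
  rw [← Equiv.sum_comp (Equiv.inv (Equiv.Perm (Fin n))) (fun π => X (i ∘ π) (j ∘ π))]
  refine Finset.sum_congr rfl fun π _ => ?_
  rw [permMatrix_conj_apply]
  rfl

lemma sum_perm_comp {d n : ℕ} (π : Equiv.Perm (Fin n)) (F : (Fin n → Fin d) → ℂ) :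
    ∑ i : Fin n → Fin d, F (i ∘ π) = ∑ i : Fin n → Fin d, F i :=
  Equiv.sum_comp (pe π) F

lemma trace_eq_sum_sum {I : Type*} [Fintype I] (M N : Matrix I I ℂ) :
    (M * N).trace = ∑ i, ∑ j, M i j * N j i := by
  simp [Matrix.trace, Matrix.diag, mul_apply]

lemma trace_symmetrize_mul {d n : ℕ} (X σ : Matrix (Fin n → Fin d) (Fin n → Fin d) ℂ)
    (hσ : ∀ (π : Equiv.Perm (Fin n)) (i j : Fin n → Fin d), σ (i ∘ π) (j ∘ π) = σ i j) :
    (symmetrize d n X * σ).trace = (X * σ).trace := by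
  rw [trace_eq_sum_sum, trace_eq_sum_sum]
  have key : ∀ π : Equiv.Perm (Fin n),
      (∑ i : Fin n → Fin d, ∑ j : Fin n → Fin d, X (i ∘ π) (j ∘ π) * σ j i)
        = ∑ i : Fin n → Fin d, ∑ j : Fin n → Fin d, X i j * σ j i := by
    intro π
    refine Fintype.sum_equiv (pe π) _ _ (fun i => ?_)
    refine Fintype.sum_equiv (pe π) _ _ (fun j => ?_)
    simp only [pe_apply]
    rw [hσ π]
  calc (∑ i, ∑ j, symmetrize d n X i j * σ j i)
      = ∑ i : Fin n → Fin d, ∑ j : Fin n → Fin d,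
          (n.factorial : ℂ)⁻¹ * ∑ π : Equiv.Perm (Fin n), X (i ∘ π) (j ∘ π) * σ j i := by
        refine Finset.sum_congr rfl fun i _ => Finset.sum_congr rfl fun j _ => ?_
        rw [symmetrize_apply, mul_assoc]
        congr 1
        rw [Finset.sum_mul]
    _ = (n.factorial : ℂ)⁻¹ * ∑ i : Fin n → Fin d, ∑ j : Fin n → Fin d,
          ∑ π : Equiv.Perm (Fin n), X (i ∘ π) (j ∘ π) * σ j i := by
        simp only [← Finset.mul_sum]
    _ = (n.factorial : ℂ)⁻¹ * ∑ π : Equiv.Perm (Fin n),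
          ∑ i : Fin n → Fin d, ∑ j : Fin n → Fin d, X (i ∘ π) (j ∘ π) * σ j i := by
        congr 1
        rw [show (∑ i : Fin n → Fin d, ∑ j : Fin n → Fin d,
            ∑ π : Equiv.Perm (Fin n), X (i ∘ π) (j ∘ π) * σ j i)
          = ∑ i : Fin n → Fin d, ∑ π : Equiv.Perm (Fin n),
            ∑ j : Fin n → Fin d, X (i ∘ π) (j ∘ π) * σ j i from
          Finset.sum_congr rfl fun i _ => Finset.sum_comm ..]
        exact Finset.sum_comm ..
    _ = ∑ i : Fin n → Fin d, ∑ j : Fin n → Fin d, X i j * σ j i := by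
        rw [Finset.sum_congr rfl (fun π _ => key π), Finset.sum_const, Finset.card_univ,
          Fintype.card_perm, Fintype.card_fin, nsmul_eq_mul, ← mul_assoc,
          inv_mul_cancel₀ (by exact_mod_cast Nat.factorial_ne_zero n), one_mul]

lemma tensPow_perm_invariant {d m : ℕ} (ρ : Matrix (Fin d) (Fin d) ℂ)
    (π : Equiv.Perm (Fin m)) (i j : Fin m → Fin d) :
    tensPow d m ρ (i ∘ π) (j ∘ π) = tensPow d m ρ i j := by
  unfold tensPow
  exact Equiv.prod_comp π (fun a => ρ (i a) (j a))

lemma tensPow_posSemidef {d m : ℕ} {ρ : Matrix (Fin d) (Fin d) ℂ}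
    (hρ : ρ.PosSemidef) : (tensPow d m ρ).PosSemidef := by
  obtain ⟨B, rfl⟩ : ∃ B : Matrix _ _ ℂ, ρ = Bᴴ * B := by
    open scoped MatrixOrder in
    obtain ⟨B, hB⟩ := CStarAlgebra.nonneg_iff_eq_star_mul_self.mp hρ.nonneg
    exact ⟨B, hB⟩
  suffices h : tensPow d m (Bᴴ * B) = (tensPow d m B)ᴴ * tensPow d m B from
    h ▸ posSemidef_conjTranspose_mul_self _
  funext i j
  show (∏ a, (Bᴴ * B) (i a) (j a)) = ((tensPow d m B)ᴴ * tensPow d m B) i j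
  rw [mul_apply]
  simp only [mul_apply, conjTranspose_apply]
  rw [Fintype.prod_sum]
  refine Finset.sum_congr rfl fun k _ => ?_
  rw [Finset.prod_mul_distrib]
  congr 1
  exact (star_prod _ _).symm

lemma tensPow_trace {d m : ℕ} (ρ : Matrix (Fin d) (Fin d) ℂ) :
    (tensPow d m ρ).trace = ρ.trace ^ m := by
  unfold tensPow Matrix.trace
  simp only [Matrix.diag]
  rw [Fintype.sum_pow]

/-- Pairing equivalence between pairs of tuples and long tuples. -/
def pairE (d q n : ℕ) : ((Fin q → Fin d) × (Fin n → Fin d)) ≃ (Fin (q + n) → Fin d) where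
  toFun p := fun a => Sum.elim p.1 p.2 (finSumFinEquiv.symm a)
  invFun i := (fun a => i (Fin.castAdd n a), fun b => i (Fin.natAdd q b))
  left_inv p := by
    ext a
    · simp [finSumFinEquiv_symm_apply_castAdd]
    · simp [finSumFinEquiv_symm_apply_natAdd]
  right_inv i := by
    funext a
    rcases h : finSumFinEquiv.symm a with s | s
    · have : a = Fin.castAdd n s := by
        have := congrArg finSumFinEquiv h; simpa using this
      simp [this, finSumFinEquiv_symm_apply_castAdd]
    · have : a = Fin.natAdd q s := by
        have := congrArg finSumFinEquiv h; simpa using this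
      simp [this, finSumFinEquiv_symm_apply_natAdd]

@[simp] lemma pairE_castAdd (d q n : ℕ) (x : Fin q → Fin d) (y : Fin n → Fin d) (a : Fin q) :
    pairE d q n (x, y) (Fin.castAdd n a) = x a := by
  simp [pairE, finSumFinEquiv_symm_apply_castAdd]

@[simp] lemma pairE_natAdd (d q n : ℕ) (x : Fin q → Fin d) (y : Fin n → Fin d) (b : Fin n) :
    pairE d q n (x, y) (Fin.natAdd q b) = y b := by
  simp [pairE, finSumFinEquiv_symm_apply_natAdd]

lemma delta_prod {d n : ℕ} (y v : Fin n → Fin d) :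
    (∏ b : Fin n, if y b = v b then (1 : ℂ) else 0) = if y = v then 1 else 0 := by
  by_cases h : y = v
  · subst h; simp
  · rw [if_neg h]
    obtain ⟨b, hb⟩ := Function.ne_iff.mp h
    exact Finset.prod_eq_zero (Finset.mem_univ b) (if_neg hb)

lemma tensExt_pairE (d q n : ℕ) (A : Matrix (Fin q → Fin d) (Fin q → Fin d) ℂ)
    (x u : Fin q → Fin d) (y v : Fin n → Fin d) :
    tensExt d q n A (pairE d q n (x, y)) (pairE d q n (u, v))
      = A x u * (if y = v then 1 else 0) := by
  unfold tensExt
  rw [show (fun a => pairE d q n (x, y) (Fin.castAdd n a)) = x from funext fun a => by simp,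
    show (fun a => pairE d q n (u, v) (Fin.castAdd n a)) = u from funext fun a => by simp]
  congr 1
  rw [← delta_prod y v]
  exact Finset.prod_congr rfl fun b _ => by simp

lemma tensPow_pairE (d q n : ℕ) (ρ : Matrix (Fin d) (Fin d) ℂ)
    (x u : Fin q → Fin d) (y v : Fin n → Fin d) :
    tensPow d (q + n) ρ (pairE d q n (x, y)) (pairE d q n (u, v))
      = tensPow d q ρ x u * tensPow d n ρ y v := by
  unfold tensPow
  rw [Fin.prod_univ_add]
  congr 1 <;> exact Finset.prod_congr rfl fun a _ => by simp

lemma trace_tensExt_mul (d q n : ℕ) (A : Matrix (Fin q → Fin d) (Fin q → Fin d) ℂ)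
    (ρ : Matrix (Fin d) (Fin d) ℂ) :
    (tensExt d q n A * tensPow d (q + n) ρ).trace
      = (A * tensPow d q ρ).trace * (tensPow d n ρ).trace := by
  rw [trace_eq_sum_sum, trace_eq_sum_sum]
  rw [← Equiv.sum_comp (pairE d q n)
    (fun i => ∑ j, tensExt d q n A i j * tensPow d (q + n) ρ j i)]
  rw [Fintype.sum_prod_type]
  have inner : ∀ (x : Fin q → Fin d) (y : Fin n → Fin d),
      (∑ j, tensExt d q n A (pairE d q n (x, y)) j * tensPow d (q + n) ρ j (pairE d q n (x, y)))
        = (∑ u, A x u * tensPow d q ρ u x) * tensPow d n ρ y y := by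
    intro x y
    rw [← Equiv.sum_comp (pairE d q n)
      (fun j => tensExt d q n A (pairE d q n (x, y)) j * tensPow d (q + n) ρ j (pairE d q n (x, y)))]
    rw [Fintype.sum_prod_type]
    rw [Finset.sum_mul]
    refine Finset.sum_congr rfl fun u _ => ?_
    have : ∀ v, tensExt d q n A (pairE d q n (x, y)) (pairE d q n (u, v))
        * tensPow d (q + n) ρ (pairE d q n (u, v)) (pairE d q n (x, y))
        = if y = v then A x u * tensPow d q ρ u x * tensPow d n ρ v y else 0 := by
      intro v
      rw [tensExt_pairE, tensPow_pairE]
      by_cases h : y = v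
      · rw [if_pos h, if_pos h]; ring
      · rw [if_neg h, if_neg h]; ring
    rw [Finset.sum_congr rfl fun v _ => this v]
    rw [Finset.sum_ite_eq]
    simp
  rw [Finset.sum_congr rfl fun x _ => Finset.sum_congr rfl fun y _ => inner x y]
  rw [show ((tensPow d n ρ).trace) = ∑ y, tensPow d n ρ y y from rfl]
  rw [Finset.sum_mul]
  refine Finset.sum_congr rfl fun x _ => ?_
  exact (Finset.mul_sum _ _ _).symm

/-- Extension of a permutation of `Fin q` to `Fin (q+n)`, fixing the tail. -/
def extPerm (q n : ℕ) (σ : Equiv.Perm (Fin q)) : Equiv.Perm (Fin (q + n)) :=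
  (Equiv.permCongr finSumFinEquiv) (Equiv.sumCongr σ (Equiv.refl (Fin n)))

@[simp] lemma extPerm_castAdd (q n : ℕ) (σ : Equiv.Perm (Fin q)) (a : Fin q) :
    extPerm q n σ (Fin.castAdd n a) = Fin.castAdd n (σ a) := by
  simp [extPerm, Equiv.permCongr_apply, finSumFinEquiv_symm_apply_castAdd]

@[simp] lemma extPerm_natAdd (q n : ℕ) (σ : Equiv.Perm (Fin q)) (b : Fin n) :
    extPerm q n σ (Fin.natAdd q b) = Fin.natAdd q b := by
  simp [extPerm, Equiv.permCongr_apply, finSumFinEquiv_symm_apply_natAdd]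

lemma tensExt_comp_extPerm (d q n : ℕ) (A : Matrix (Fin q → Fin d) (Fin q → Fin d) ℂ)
    (σ : Equiv.Perm (Fin q)) (x y : Fin (q + n) → Fin d) :
    tensExt d q n A (x ∘ extPerm q n σ) (y ∘ extPerm q n σ)
      = tensExt d q n (fun u v => A (u ∘ σ) (v ∘ σ)) x y := by
  unfold tensExt
  congr 1
  · congr 1 <;> · funext a; simp [Function.comp]
  · refine Finset.prod_congr rfl fun b _ => ?_
    simp [Function.comp]

lemma sum_perm_tensExt (d q n : ℕ) (A : Matrix (Fin q → Fin d) (Fin q → Fin d) ℂ)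
    (i j : Fin (q + n) → Fin d) :
    (∑ π : Equiv.Perm (Fin (q + n)), tensExt d q n (symmetrize d q A) (i ∘ π) (j ∘ π))
      = ∑ π : Equiv.Perm (Fin (q + n)), tensExt d q n A (i ∘ π) (j ∘ π) := by
  have expand : ∀ x y : Fin (q + n) → Fin d,
      tensExt d q n (symmetrize d q A) x y
        = (q.factorial : ℂ)⁻¹ * ∑ σ : Equiv.Perm (Fin q),
            tensExt d q n (fun u v => A (u ∘ σ) (v ∘ σ)) x y := by
    intro x y
    unfold tensExt
    rw [symmetrize_apply, mul_assoc]
    congr 1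
    rw [Finset.sum_mul]
  calc (∑ π : Equiv.Perm (Fin (q + n)), tensExt d q n (symmetrize d q A) (i ∘ π) (j ∘ π))
      = (q.factorial : ℂ)⁻¹ * ∑ π : Equiv.Perm (Fin (q + n)), ∑ σ : Equiv.Perm (Fin q),
          tensExt d q n (fun u v => A (u ∘ σ) (v ∘ σ)) (i ∘ π) (j ∘ π) := by
        rw [Finset.mul_sum]
        exact Finset.sum_congr rfl fun π _ => expand _ _
    _ = (q.factorial : ℂ)⁻¹ * ∑ σ : Equiv.Perm (Fin q), ∑ π : Equiv.Perm (Fin (q + n)),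
          tensExt d q n A (i ∘ π) (j ∘ π) := by
        congr 1
        rw [Finset.sum_comm]
        refine Finset.sum_congr rfl fun σ _ => ?_
        rw [← Equiv.sum_comp (Equiv.mulRight (extPerm q n σ))
          (fun π => tensExt d q n A (i ∘ π) (j ∘ π))]
        refine Finset.sum_congr rfl fun π _ => ?_
        rw [← tensExt_comp_extPerm]
        congr 1
    _ = ∑ π : Equiv.Perm (Fin (q + n)), tensExt d q n A (i ∘ π) (j ∘ π) := by
        rw [Finset.sum_const, Finset.card_univ, Fintype.card_perm, Fintype.card_fin,
          nsmul_eq_mul, ← mul_assoc,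
          inv_mul_cancel₀ (by exact_mod_cast Nat.factorial_ne_zero q), one_mul]

lemma tensExt_herm_entry {d q n : ℕ} {B : Matrix (Fin q → Fin d) (Fin q → Fin d) ℂ}
    (hB : B.IsHermitian) (x y : Fin (q + n) → Fin d) :
    star (tensExt d q n B x y) = tensExt d q n B y x := by
  unfold tensExt
  rw [star_mul']
  congr 1
  · exact hB.apply _ _
  · rw [star_prod]
    refine Finset.prod_congr rfl fun b _ => ?_
    rw [apply_ite (star : ℂ → ℂ), star_one, star_zero]
    congr 1
    simp only [eq_iff_iff]; exact eq_comm

lemma symmetrize_tensExt_isHermitian {d q n : ℕ}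
    {A : Matrix (Fin q → Fin d) (Fin q → Fin d) ℂ}
    (hA : (symmetrize d q A).IsHermitian) :
    (symmetrize d (q + n) (tensExt d q n A)).IsHermitian := by
  have hc : star (((q + n).factorial : ℂ)⁻¹) = (((q + n).factorial : ℂ))⁻¹ := by
    rw [star_inv₀, star_natCast]
  refine Matrix.IsHermitian.ext fun i j => ?_
  rw [symmetrize_apply, symmetrize_apply]
  rw [← sum_perm_tensExt d q n A i j, ← sum_perm_tensExt d q n A j i]
  rw [star_mul', hc]
  congr 1
  rw [star_sum]
  exact Finset.sum_congr rfl fun π _ => tensExt_herm_entry hA _ _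

lemma posSemidef_trace_nonneg {I : Type*} [Fintype I] [DecidableEq I] {X : Matrix I I ℂ}
    (hX : X.PosSemidef) : 0 ≤ X.trace := by
  classical
  refine Finset.sum_nonneg fun i _ => ?_
  have h := hX.dotProduct_mulVec_nonneg (Pi.single i 1)
  have : star (Pi.single i 1) ⬝ᵥ X *ᵥ Pi.single i 1 = X i i := by
    rw [Matrix.mulVec_single]
    simp [dotProduct, Pi.single_apply, apply_ite (star : ℂ → ℂ)]
  rwa [this] at h

lemma trace_mul_nonneg {I : Type*} [Fintype I] [DecidableEq I] {N σ : Matrix I I ℂ}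
    (hN : N.PosSemidef) (hσ : σ.PosSemidef) : 0 ≤ (N * σ).trace := by
  obtain ⟨B, rfl⟩ : ∃ B : Matrix _ _ ℂ, σ = Bᴴ * B := by
    open scoped MatrixOrder in
    obtain ⟨B, hB⟩ := CStarAlgebra.nonneg_iff_eq_star_mul_self.mp hσ.nonneg
    exact ⟨B, hB⟩
  have : (N * (Bᴴ * B)).trace = (B * N * Bᴴ).trace := by
    rw [← Matrix.mul_assoc, Matrix.trace_mul_cycle]
  rw [this]
  exact posSemidef_trace_nonneg (hN.mul_mul_conjTranspose_same B)

lemma trace_mul_le_lamMax {I : Type*} [Fintype I] [DecidableEq I] [Nonempty I]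
    (M σ : Matrix I I ℂ) (hM : M.IsHermitian) (hσ : σ.PosSemidef) (htr : σ.trace = 1) :
    (M * σ).trace.re ≤ lamMax M := by
  obtain ⟨i0, hi0⟩ := Finite.exists_max hM.eigenvalues
  set t0 := hM.eigenvalues i0 with ht0
  set U : Matrix I I ℂ := (hM.eigenvectorUnitary : Matrix I I ℂ) with hU
  have hUU : U * Uᴴ = 1 := by
    have := (Matrix.mem_unitaryGroup_iff).mp (hM.eigenvectorUnitary).2
    rwa [Matrix.star_eq_conjTranspose] at this
  have hN : ((t0 : ℂ) • (1 : Matrix I I ℂ) - M).PosSemidef := by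
    have hdiag : Matrix.diagonal (fun i => ((t0 - hM.eigenvalues i : ℝ) : ℂ))
        = (t0 : ℂ) • (1 : Matrix I I ℂ)
          - Matrix.diagonal (RCLike.ofReal ∘ hM.eigenvalues) := by
      rw [Matrix.smul_one_eq_diagonal, Matrix.diagonal_sub]
      congr 1
      funext i
      push_cast
      rfl
    have h1 : (t0 : ℂ) • (1 : Matrix I I ℂ) - M
        = U * Matrix.diagonal (fun i => ((t0 - hM.eigenvalues i : ℝ) : ℂ)) * Uᴴ := by
      rw [hdiag, Matrix.mul_sub, Matrix.sub_mul]
      congr 1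
      · rw [mul_smul_comm, Matrix.mul_one, smul_mul_assoc, hUU]
      · conv_lhs => rw [hM.spectral_theorem]
        rw [Unitary.conjStarAlgAut_apply, Matrix.star_eq_conjTranspose]
    rw [h1]
    refine Matrix.PosSemidef.mul_mul_conjTranspose_same ?_ U
    refine Matrix.posSemidef_diagonal_iff.mpr fun i => ?_
    exact Complex.zero_le_real.mpr (sub_nonneg.mpr (hi0 i))
  have hbound : ∀ t ∈ {t : ℝ | ∃ v : I → ℂ, v ≠ 0 ∧ M *ᵥ v = (t : ℂ) • v}, t ≤ t0 := by
    rintro t ⟨v, hv, hMv⟩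
    have h2 := hN.dotProduct_mulVec_nonneg v
    have hNv : ((t0 : ℂ) • (1 : Matrix I I ℂ) - M) *ᵥ v = (((t0 - t : ℝ)) : ℂ) • v := by
      rw [Matrix.sub_mulVec, Matrix.smul_mulVec, Matrix.one_mulVec, hMv]
      push_cast
      rw [sub_smul]
    rw [hNv, dotProduct_smul] at h2
    have hp : 0 < star v ⬝ᵥ v := dotProduct_star_self_pos_iff.mpr hv
    have hpre : 0 < (star v ⬝ᵥ v).re ∧ (star v ⬝ᵥ v).im = 0 := by
      have := Complex.lt_def.mp hp
      simp only [Complex.zero_re, Complex.zero_im] at this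
      exact ⟨this.1, this.2.symm⟩
    have h2re : 0 ≤ (t0 - t) * (star v ⬝ᵥ v).re := by
      have := (Complex.le_def.mp h2).1
      simpa [Complex.mul_re, hpre.2] using this
    nlinarith [hpre.1]
  have hmem : t0 ∈ {t : ℝ | ∃ v : I → ℂ, v ≠ 0 ∧ M *ᵥ v = (t : ℂ) • v} := by
    refine ⟨⇑(hM.eigenvectorBasis i0), ?_, ?_⟩
    · intro h
      exact hM.eigenvectorBasis.orthonormal.ne_zero i0 (by ext a; exact congrFun h a)
    · rw [hM.mulVec_eigenvectorBasis]
      funext a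
      simp [Complex.real_smul, ht0]
  have ht0le : t0 ≤ lamMax M := le_csSup ⟨t0, hbound⟩ hmem
  refine le_trans ?_ ht0le
  have key : (M * σ).trace
      = (t0 : ℂ) * σ.trace - (((t0 : ℂ) • (1 : Matrix I I ℂ) - M) * σ).trace := by
    rw [Matrix.sub_mul, Matrix.trace_sub, Matrix.smul_mul, Matrix.trace_smul, Matrix.one_mul]
    simp
  have h3 := trace_mul_nonneg hN hσ
  have h3re : 0 ≤ ((((t0 : ℂ) • (1 : Matrix I I ℂ) - M) * σ).trace).re :=
    (Complex.le_def.mp h3).1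
  rw [key, htr, mul_one]
  simp only [Complex.sub_re, Complex.ofReal_re]
  linarith

/-- For `q ≥ 1` and `A` on `ℋ^{⊗q}` with Hermitian symmetric part,
for every `n ≥ 0` and every density matrix `ρ` on `ℂ^d`,
`Tr[𝖯_q(A) ρ^{⊗q}] ≤ λ_max(𝖯_{q+n}(A ⊗ I^{⊗n}))`: each `μ_n(A)` is an upper bound on
`max_ρ Tr[A ρ^{⊗q}]`. -/
theorem stmt2 (d q : ℕ) (hd : 1 ≤ d) (hq : 1 ≤ q)
    (A : Matrix (Fin q → Fin d) (Fin q → Fin d) ℂ)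
    (hA : (symmetrize d q A).IsHermitian) :
    ∀ n : ℕ, ∀ ρ : Matrix (Fin d) (Fin d) ℂ, IsDensity d ρ →
      ((symmetrize d q A) * tensPow d q ρ).trace.re ≤
        lamMax (symmetrize d (q + n) (tensExt d q n A)) := by
  intro n ρ hρ
  obtain ⟨hpsd, htr⟩ := hρ
  haveI : NeZero d := ⟨by omega⟩
  haveI : Nonempty (Fin (q + n) → Fin d) := ⟨fun _ => ⟨0, by omega⟩⟩
  set M := symmetrize d (q + n) (tensExt d q n A) with hM
  have hMH : M.IsHermitian := symmetrize_tensExt_isHermitian hA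
  have hbig_psd : (tensPow d (q + n) ρ).PosSemidef := tensPow_posSemidef hpsd
  have hbig_tr : (tensPow d (q + n) ρ).trace = 1 := by
    rw [tensPow_trace, htr, one_pow]
  have step1 : ((symmetrize d q A) * tensPow d q ρ).trace = (A * tensPow d q ρ).trace :=
    trace_symmetrize_mul A (tensPow d q ρ) (fun π i j => tensPow_perm_invariant ρ π i j)
  have step2 : (M * tensPow d (q + n) ρ).trace
      = (tensExt d q n A * tensPow d (q + n) ρ).trace :=
    trace_symmetrize_mul (tensExt d q n A) (tensPow d (q + n) ρ)
      (fun π i j => tensPow_perm_invariant ρ π i j)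
  have step3 : (tensExt d q n A * tensPow d (q + n) ρ).trace
      = (A * tensPow d q ρ).trace := by
    rw [trace_tensExt_mul, tensPow_trace, htr, one_pow, mul_one]
  have heq : ((symmetrize d q A) * tensPow d q ρ).trace
      = (M * tensPow d (q + n) ρ).trace := by
    rw [step1, step2, step3]
  rw [heq]
  exact trace_mul_le_lamMax M (tensPow d (q + n) ρ) hMH hbig_psd hbig_tr
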